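/- Let I0, I1, I2 be operator/polynomial ideals and n ≥ 1. Suppose every n-homogeneous polynomial P : E → F lying in P_{L[I0]}(^nE;F) ∩ P_{L[I1]}(^nE;F) belongs to P_{I2}(^nE;F), and suppose that for every P ∈ P_{I2}(^nE;F) and a ∈ E the operator x ↦ P̌(x,a,...,a) lies in L_{I2}(E;F). Then L_{I0}(E;F) ∩ L_{I1}(E;F) ⊆ L_{I2}(E;F). -/

import Mathlib

structure BanachSpaceOver (𝕜 : Type) [NormedField 𝕜] where
  carrier : Type
  [grp : NormedAddCommGroup carrier]
  [mod : NormedSpace 𝕜 carrier]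
  [comp : CompleteSpace carrier]

attribute [instance] BanachSpaceOver.grp BanachSpaceOver.mod BanachSpaceOver.comp

/-- A continuous multilinear map is symmetric. -/
def IsSymMap {𝕜 E F : Type} [RCLike 𝕜] [NormedAddCommGroup E] [NormedSpace 𝕜 E]
    [NormedAddCommGroup F] [NormedSpace 𝕜 F] (m : ℕ)
    (T : ContinuousMultilinearMap 𝕜 (fun _ : Fin m => E) F) : Prop :=
  ∀ (σ : Equiv.Perm (Fin m)) (x : Fin m → E), T (x ∘ σ) = T x


open Finset Function

section helpers
variable {𝕜 F : Type} [RCLike 𝕜] [NormedAddCommGroup F] [NormedSpace 𝕜 F] {n : ℕ}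
  (φ : F →L[𝕜] 𝕜)

lemma prod_if_update_self (y : Fin n → F) (k : Fin n) (v : F) :
    (∏ j, if j = k then (1:𝕜) else φ (update y k v j))
      = ∏ j, if j = k then (1:𝕜) else φ (y j) := by
  refine Finset.prod_congr rfl fun j _ => ?_
  by_cases h : j = k
  · simp [h]
  · simp [h, Function.update_of_ne h]

lemma prod_if_update_ne {i k : Fin n} (hik : i ≠ k) (y : Fin n → F) (v : F) :
    (∏ j, if j = k then (1:𝕜) else φ (update y i v j))
      = φ v * ∏ j ∈ univ \ {i}, if j = k then (1:𝕜) else φ (y j) := by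
  have h1 : (fun j => if j = k then (1:𝕜) else φ (update y i v j))
      = Function.update (fun j => if j = k then (1:𝕜) else φ (y j)) i (φ v) := by
    funext j
    by_cases h : j = i
    · subst h; simp [hik]
    · simp [h, Function.update_of_ne h]
  rw [show (∏ j, if j = k then (1:𝕜) else φ (update y i v j))
      = ∏ j, Function.update (fun j => if j = k then (1:𝕜) else φ (y j)) i (φ v) j from
      by rw [← h1]]
  rw [Finset.prod_update_of_mem (mem_univ i)]

end helpers

/-- The multilinear map `y ↦ (∏_{i ≠ k} φ (y i)) • y k`. -/
noncomputable def slotMap {𝕜 F : Type} [RCLike 𝕜] [NormedAddCommGroup F] [NormedSpace 𝕜 F]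
    {n : ℕ} (φ : F →L[𝕜] 𝕜) (k : Fin n) :
    ContinuousMultilinearMap 𝕜 (fun _ : Fin n => F) F :=
  MultilinearMap.mkContinuous
    { toFun := fun y => (∏ i, if i = k then (1:𝕜) else φ (y i)) • y k
      map_update_add' := by
        intro dec y i a b
        cases Subsingleton.elim dec (instDecidableEqFin n)
        by_cases hik : i = k
        · subst hik
          simp only [prod_if_update_self, Function.update_self]
          exact smul_add _ a b
        · have hyk : ∀ v : F, update y i v k = y k := fun v =>
            Function.update_of_ne (fun h => hik h.symm) v y
          simp only [prod_if_update_ne φ hik, hyk, map_add]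
          rw [add_mul, add_smul]
      map_update_smul' := by
        intro dec y i c a
        cases Subsingleton.elim dec (instDecidableEqFin n)
        by_cases hik : i = k
        · subst hik
          simp only [prod_if_update_self, Function.update_self]
          exact smul_comm _ c _
        · have hyk : ∀ v : F, update y i v k = y k := fun v =>
            Function.update_of_ne (fun h => hik h.symm) v y
          simp only [prod_if_update_ne φ hik, hyk, map_smul, smul_eq_mul]
          rw [mul_assoc, mul_smul] }
    (‖φ‖ ^ (n - 1))
    (by
      intro y
      simp only [MultilinearMap.coe_mk]
      have h0 : (∏ i, if i = k then (1:𝕜) else φ (y i))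
          = ∏ i ∈ univ.erase k, φ (y i) := by
        rw [← Finset.mul_prod_erase univ (fun i => if i = k then (1:𝕜) else φ (y i)) (mem_univ k)]
        simp only [eq_self_iff_true, if_true, one_mul]
        refine Finset.prod_congr rfl fun j hj => if_neg (Finset.ne_of_mem_erase hj)
      rw [h0, norm_smul]
      calc ‖∏ i ∈ univ.erase k, φ (y i)‖ * ‖y k‖
          ≤ (∏ i ∈ univ.erase k, ‖φ (y i)‖) * ‖y k‖ :=
            mul_le_mul_of_nonneg_right (norm_prod_le _ _) (norm_nonneg _)
        _ ≤ (∏ i ∈ univ.erase k, ‖φ‖ * ‖y i‖) * ‖y k‖ :=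
            mul_le_mul_of_nonneg_right
              (Finset.prod_le_prod (fun i _ => norm_nonneg _) (fun i _ => φ.le_opNorm _))
              (norm_nonneg _)
        _ = ‖φ‖ ^ (n - 1) * ((∏ i ∈ univ.erase k, ‖y i‖) * ‖y k‖) := by
            rw [Finset.prod_mul_distrib, Finset.prod_const]
            rw [Finset.card_erase_of_mem (mem_univ k), Finset.card_univ, Fintype.card_fin]
            ring
        _ = ‖φ‖ ^ (n - 1) * ∏ i, ‖y i‖ := by
            rw [mul_comm (∏ i ∈ univ.erase k, ‖y i‖),
              ← Finset.mul_prod_erase univ (fun i => ‖y i‖) (mem_univ k)])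

@[simp] theorem slotMap_apply {𝕜 F : Type} [RCLike 𝕜] [NormedAddCommGroup F] [NormedSpace 𝕜 F]
    {n : ℕ} (φ : F →L[𝕜] 𝕜) (k : Fin n) (y : Fin n → F) :
    slotMap φ k y = (∏ i, if i = k then (1:𝕜) else φ (y i)) • y k := rfl

/-- Lemma 3 of the paper: if `P_{L[I0]}(^nE;F) ∩ P_{L[I1]}(^nE;F) ⊆ P_{I2}(^nE;F)` and
polynomials of `I2` linearize (fixing `a` in all slots but one) into the linear component
`L_{I2}(E;F)`, then `L_{I0}(E;F) ∩ L_{I1}(E;F) ⊆ L_{I2}(E;F)`. The ideal properties of the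
linear component of `I2` (subspace containing rank-one operators) are explicit hypotheses. -/
theorem linear_inclusion_of_factorization_inclusion {𝕜 E : Type} [RCLike 𝕜]
    [NormedAddCommGroup E] [NormedSpace 𝕜 E] [CompleteSpace E]
    (Fb : BanachSpaceOver 𝕜) (n : ℕ) (hn : 1 ≤ n)
    (I0 I1 : ∀ G : BanachSpaceOver 𝕜, Set (E →L[𝕜] G.carrier))
    (I2n I2lin : Set (E → Fb.carrier))
    (hsub : ∀ P : E → Fb.carrier,
      (∃ (G : BanachSpaceOver 𝕜) (u : E →L[𝕜] G.carrier)
        (Q : ContinuousMultilinearMap 𝕜 (fun _ : Fin n => G.carrier) Fb.carrier),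
        u ∈ I0 G ∧ ∀ x, P x = Q fun _ => u x) →
      (∃ (G : BanachSpaceOver 𝕜) (u : E →L[𝕜] G.carrier)
        (Q : ContinuousMultilinearMap 𝕜 (fun _ : Fin n => G.carrier) Fb.carrier),
        u ∈ I1 G ∧ ∀ x, P x = Q fun _ => u x) →
      P ∈ I2n)
    (hi : ∀ T : ContinuousMultilinearMap 𝕜 (fun _ : Fin n => E) Fb.carrier,
        IsSymMap n T → (fun x => T fun _ => x) ∈ I2n →
        ∀ a : E, (fun x => T fun i => if (i : ℕ) = 0 then x else a) ∈ I2lin)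
    (hrank : ∀ (ψ : E →L[𝕜] 𝕜) (y : Fb.carrier), (fun x => ψ x • y) ∈ I2lin)
    (hlin : ∀ f g : E → Fb.carrier, f ∈ I2lin → g ∈ I2lin → ∀ c d : 𝕜,
        (fun x => c • f x + d • g x) ∈ I2lin) :
    ∀ T : E →L[𝕜] Fb.carrier, T ∈ I0 Fb → T ∈ I1 Fb → ⇑T ∈ I2lin := by
  classical
  intro T hT0 hT1
  by_cases hT : ∀ x : E, T x = 0
  · have h0 := hrank 0 0
    have hTeq : ⇑T = fun x => (0 : E →L[𝕜] 𝕜) x • (0 : Fb.carrier) := by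
      funext x; simp [hT x]
    rw [hTeq]; exact h0
  · push_neg at hT
    obtain ⟨a, ha⟩ := hT
    obtain ⟨φ, -, hφa⟩ := exists_dual_vector 𝕜 (T a) (norm_ne_zero_iff.mpr ha)
    have hc : φ (T a) ≠ 0 := by
      rw [hφa]
      exact_mod_cast RCLike.ofReal_ne_zero.mpr (norm_ne_zero_iff.mpr ha)
    set Q : ContinuousMultilinearMap 𝕜 (fun _ : Fin n => Fb.carrier) Fb.carrier :=
      ∑ k : Fin n, slotMap φ k with hQ
    set M : ContinuousMultilinearMap 𝕜 (fun _ : Fin n => E) Fb.carrier :=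
      Q.compContinuousLinearMap (fun _ => T) with hM
    have hMapp : ∀ z : Fin n → E,
        M z = ∑ k : Fin n,
          (∏ i, if i = k then (1:𝕜) else φ (T (z i))) • T (z k) := by
      intro z
      simp [hM, hQ, ContinuousMultilinearMap.sum_apply]
    have hsym : IsSymMap n M := by
      intro σ x
      rw [hMapp, hMapp]
      refine Fintype.sum_equiv σ _ _ fun k => ?_
      have hprod : (∏ i, if i = k then (1:𝕜) else φ (T ((x ∘ σ) i)))
          = ∏ i, if i = σ k then (1:𝕜) else φ (T (x i)) := by
        refine Fintype.prod_equiv σ _ _ fun i => ?_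
        simp [Function.comp, EmbeddingLike.apply_eq_iff_eq]
      rw [hprod]
      rfl
    have hP : (fun x => M fun _ => x) ∈ I2n :=
      hsub _ ⟨Fb, T, Q, hT0, fun x => rfl⟩ ⟨Fb, T, Q, hT1, fun x => rfl⟩
    have h2 := hi M hsym hP a
    set i0 : Fin n := ⟨0, hn⟩ with hi0
    set e : 𝕜 := ∏ i : Fin n, if i = i0 then 1 else φ (T a) with he'
    set w : Fb.carrier := ∑ k ∈ Finset.univ.erase i0,
      (∏ i ∈ Finset.univ.erase i0, if i = k then (1:𝕜) else φ (T a)) • T a with hw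
    have hval : ∀ (i : Fin n), (i : ℕ) = 0 ↔ i = i0 := by
      intro i; rw [Fin.ext_iff]
    have hg : ∀ x : E, M (fun i => if (i : ℕ) = 0 then x else a)
        = e • T x + φ (T x) • w := by
      intro x
      rw [hMapp]
      have hz : ∀ i : Fin n, (if (i : ℕ) = 0 then x else a)
          = if i = i0 then x else a := by
        intro i
        by_cases h : i = i0
        · rw [if_pos ((hval i).mpr h), if_pos h]
        · rw [if_neg (fun hh => h ((hval i).mp hh)), if_neg h]
      simp only [hz]
      rw [← Finset.add_sum_erase Finset.univ _ (Finset.mem_univ i0)]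
      congr 1
      · rw [if_pos rfl]
        congr 1
        refine Finset.prod_congr rfl fun i _ => ?_
        by_cases h : i = i0
        · rw [if_pos h, if_pos h]
        · rw [if_neg h, if_neg h, if_neg h]
      · rw [hw, Finset.smul_sum]
        refine Finset.sum_congr rfl fun k hk => ?_
        have hki0 : k ≠ i0 := Finset.ne_of_mem_erase hk
        rw [if_neg hki0]
        have hsplit : (∏ i, if i = k then (1:𝕜)
              else φ (T (if i = i0 then x else a)))
            = φ (T x) * ∏ i ∈ Finset.univ.erase i0, if i = k then (1:𝕜) else φ (T a) := by
          rw [← Finset.mul_prod_erase Finset.univ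
            (fun i => if i = k then (1:𝕜) else φ (T (if i = i0 then x else a)))
            (Finset.mem_univ i0)]
          congr 1
          · rw [if_neg (fun h => hki0 h.symm), if_pos rfl]
          · refine Finset.prod_congr rfl fun i hi => ?_
            rw [if_neg (Finset.ne_of_mem_erase hi)]
        rw [hsplit, mul_smul]
    have he : e ≠ 0 := by
      rw [he']
      refine Finset.prod_ne_zero_iff.mpr fun i _ => ?_
      by_cases h : i = i0
      · rw [if_pos h]; exact one_ne_zero
      · rw [if_neg h]; exact hc
    have hr := hrank (φ.comp T) w
    have key := hlin _ _ h2 hr e⁻¹ (-e⁻¹)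
    have hTeq : ⇑T = fun x =>
        e⁻¹ • M (fun i => if (i : ℕ) = 0 then x else a)
          + (-e⁻¹) • ((φ.comp T) x • w) := by
      funext x
      rw [hg x, smul_add, smul_smul, inv_mul_cancel₀ he, one_smul]
      simp only [ContinuousLinearMap.comp_apply, neg_smul]
      abel
    rw [hTeq]
    exact key
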